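/- Let q be a real number with 0 < q < 1, let c₀, d₀ be complex numbers with c₀ d₀ = 1, and let A be an associative unital ℂ-algebra containing an invertible element x and elements y, ŷ satisfying: y x = q² x y; ŷ x = q^{-2} x ŷ; ŷ y = −(q^{-1}x − c₀)(q^{-1}x − d₀); y ŷ = −(q x − c₀)(q x − d₀). Set a = q^{1/2}/(q^{-1} − q), and define E = a·y, F = a·x^{-1}ŷ, K = x, K^{-1} = x^{-1}. Then: K E = q^{-2} E K; K F = q² F K; and E F − F E = (K − K^{-1})/(q^{-1} − q). -/

import Mathlib

/-- the quantum moment map. In the quantum algebra of functions on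
the quantum hyperboloid `X_{c₀,d₀}` (with `c₀d₀ = 1`), the elements
`E = a•y`, `F = a•(x⁻¹ŷ)`, `K = x`, `K⁻¹ = x⁻¹` with `a = q^{1/2}/(q⁻¹ − q)`
satisfy the defining relations of `U_q(sl(2))`. -/
theorem quantum_moment_map_relations
    (q : ℝ) (hq0 : 0 < q) (hq1 : q < 1)
    (c₀ d₀ : ℂ) (hcd : c₀ * d₀ = 1)
    (A : Type*) [Ring A] [Algebra ℂ A]
    (x x' y yh : A)
    (hxx' : x * x' = 1) (hx'x : x' * x = 1)
    (h1 : y * x = ((q : ℂ) ^ 2) • (x * y))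
    (h2 : yh * x = ((q : ℂ) ^ 2)⁻¹ • (x * yh))
    (h3 : yh * y = -((((q : ℂ))⁻¹ • x - c₀ • (1 : A)) * (((q : ℂ))⁻¹ • x - d₀ • (1 : A))))
    (h4 : y * yh = -(((q : ℂ) • x - c₀ • (1 : A)) * ((q : ℂ) • x - d₀ • (1 : A))))
    (a : ℂ) (ha : a = (Real.sqrt q : ℂ) / (((q : ℂ))⁻¹ - (q : ℂ)))
    (E F : A) (hE : E = a • y) (hF : F = a • (x' * yh)) :
    x * E = ((q : ℂ) ^ (-2 : ℤ)) • (E * x) ∧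
    x * F = ((q : ℂ) ^ 2) • (F * x) ∧
    E * F - F * E = (((q : ℂ))⁻¹ - (q : ℂ))⁻¹ • (x - x') := by
  have hq : (q : ℂ) ≠ 0 := by exact_mod_cast hq0.ne'
  have hq2 : ((q : ℂ) ^ 2) ≠ 0 := pow_ne_zero _ hq
  have hs : (Real.sqrt q : ℂ) * (Real.sqrt q : ℂ) = (q : ℂ) := by
    exact_mod_cast congrArg (Complex.ofReal) (Real.mul_self_sqrt hq0.le)
  have hdR : q⁻¹ - q ≠ 0 := by
    have : q < q⁻¹ := lt_trans hq1 (one_lt_inv₀ hq0 |>.mpr hq1)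
    exact sub_ne_zero.mpr this.ne'
  have hd : ((q : ℂ))⁻¹ - (q : ℂ) ≠ 0 := by
    have : (((q⁻¹ - q : ℝ)) : ℂ) ≠ 0 := Complex.ofReal_ne_zero.mpr hdR
    push_cast at this
    exact this
  have hz : ((q : ℂ)) ^ (-2 : ℤ) = ((q : ℂ) ^ 2)⁻¹ := by
    rw [zpow_neg, zpow_two, pow_two]
  have hxy : x * y = ((q : ℂ) ^ 2)⁻¹ • (y * x) := by
    rw [h1, smul_smul, inv_mul_cancel₀ hq2, one_smul]
  have hx'y : x' * y = ((q : ℂ) ^ 2) • (y * x') := by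
    calc x' * y = x' * (y * x) * x' := by
          conv_rhs => rw [mul_assoc, mul_assoc, hxx', mul_one]
      _ = ((q : ℂ) ^ 2) • (y * x') := by
          rw [h1, mul_smul_comm, smul_mul_assoc, ← mul_assoc x' x y, hx'x, one_mul]
  have hyx' : y * x' = ((q : ℂ) ^ 2)⁻¹ • (x' * y) := by
    rw [hx'y, smul_smul, inv_mul_cancel₀ hq2, one_smul]
  refine ⟨?_, ?_, ?_⟩
  · rw [hE, hz, mul_smul_comm, hxy, smul_mul_assoc, smul_smul, smul_smul, mul_comm]
  · rw [hF, mul_smul_comm, smul_mul_assoc, ← mul_assoc, hxx', one_mul,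
      mul_assoc, h2, mul_smul_comm, ← mul_assoc, hx'x, one_mul, smul_smul,
      smul_smul, mul_comm ((q:ℂ)^2) a, mul_assoc, mul_inv_cancel₀ hq2, mul_one]
  · -- expand the two quadratic products
    have e4 : x' * (y * yh) =
        -(((q : ℂ) ^ 2) • x) + ((q : ℂ) * (c₀ + d₀)) • (1 : A) - x' := by
      rw [h4]
      have expand : (((q : ℂ) • x - c₀ • (1 : A)) * ((q : ℂ) • x - d₀ • (1 : A))) =
          ((q : ℂ) ^ 2) • (x * x) - ((q : ℂ) * (c₀ + d₀)) • x + (1 : A) := by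
        simp only [mul_sub, sub_mul, smul_mul_smul_comm, mul_one, one_mul, hcd, one_smul,
          pow_two]
        module
      rw [expand]
      simp only [mul_neg, mul_add, mul_sub, mul_smul_comm, mul_one]
      rw [← mul_assoc, hx'x, one_mul]
      module
    have e3 : x' * (yh * y) =
        -(((q : ℂ) ^ 2)⁻¹ • x) + ((q : ℂ))⁻¹ • ((c₀ + d₀) • (1 : A)) - x' := by
      rw [h3]
      have expand : ((((q : ℂ))⁻¹ • x - c₀ • (1 : A)) * (((q : ℂ))⁻¹ • x - d₀ • (1 : A))) =
          (((q : ℂ))⁻¹ * ((q : ℂ))⁻¹) • (x * x) - (((q : ℂ))⁻¹ * (c₀ + d₀)) • x + (1 : A) := by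
        simp only [mul_sub, sub_mul, smul_mul_smul_comm, mul_one, one_mul, hcd, one_smul]
        module
      rw [expand]
      simp only [mul_neg, mul_add, mul_sub, mul_smul_comm, mul_one]
      rw [← mul_assoc, hx'x, one_mul]
      match_scalars <;> field_simp <;> ring
    subst ha
    rw [hE, hF, smul_mul_smul_comm, smul_mul_smul_comm,
      ← mul_assoc y x' yh, hyx', smul_mul_assoc, mul_assoc, e4, mul_assoc x' yh y, e3]
    have h12 : (1 : ℂ) - (q:ℂ)^2 ≠ 0 := by
      have : (q:ℂ) * ((q:ℂ)⁻¹ - (q:ℂ)) = 1 - (q:ℂ)^2 := by field_simp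
      rw [← this]
      exact mul_ne_zero hq hd
    have hs2 : ((Real.sqrt q : ℝ) : ℂ)^2 = (q:ℂ) := by rw [sq, hs]
    have h12' : (1 : ℂ) - (q:ℂ)*(q:ℂ) ≠ 0 := by rw [← sq]; exact h12
    have hprod : ((Real.sqrt q : ℝ) : ℂ) * (q:ℂ) * (((Real.sqrt q : ℝ) : ℂ) * (q:ℂ)) = (q:ℂ)^3 := by
      linear_combination ((q:ℂ)^2) * hs
    match_scalars <;>
    · field_simp [h12]
      rw [hs2]
      ring
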